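/- Let S/R be a Frobenius extension of two-sided Noetherian rings with the R-R-bimodule S centrally projective over R. If ω is a finitely generated R-module with fadim_R(ω) ≥ n+2 and Ext^i_R(ω,ω)=0 for 1 ≤ i ≤ n, then fadim_S(S ⊗_R ω) ≥ n+2. -/

import Mathlib

open CategoryTheory

noncomputable section

/-- `Ext^n_A(M, N) = 0`, via Mathlib's `Ext` for the `ℤ`-linear abelian
category of left `A`-modules. -/
def ExtVanish (A : Type) [Ring A] (n : ℕ) (M N : Type) [AddCommGroup M] [Module A M]
    [AddCommGroup N] [Module A N] : Prop :=
  Subsingleton (((Ext ℤ (ModuleCat.{0} A) n).obj (Opposite.op (ModuleCat.of A M))).obj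
    (ModuleCat.of A N))

/-- `X` belongs to `add ω`: `X` is a direct summand of a finite direct sum of
copies of `ω`. -/
def MemAdd (A : Type) [Ring A] (ω : Type) [AddCommGroup ω] [Module A ω]
    (X : Type) [AddCommGroup X] [Module A X] : Prop :=
  ∃ (n : ℕ) (i : X →ₗ[A] (Fin n → ω)) (p : (Fin n → ω) →ₗ[A] X), ∀ x, p (i x) = x

/-- `f : M → X` is a left `add ω`-approximation of `M`: every map from `M` to a module
in `add ω` factors through `f`. -/
def IsLeftApprox (A : Type) [Ring A] (ω : Type) [AddCommGroup ω] [Module A ω]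
    {M X : Type} [AddCommGroup M] [Module A M] [AddCommGroup X] [Module A X]
    (f : M →ₗ[A] X) : Prop :=
  ∀ (Z : Type) [AddCommGroup Z] [Module A Z], MemAdd A ω Z →
    ∀ g : M →ₗ[A] Z, ∃ h : X →ₗ[A] Z, h.comp f = g

/-- There is an exact sequence `0 → M → ω₁ → ⋯ → ωₙ` with each `ωᵢ ∈ add ω` and each
`Im fᵢ ↪ ωᵢ` a left `add ω`-approximation.  Applied to `M = A` this says
`fadim_A ω ≥ n`; by Huang's theorem, applied to a module `M` it says exactly that
`M` is `ω`-`n`-torsionfree. -/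
def ApproxChain (A : Type) [Ring A] (ω : Type) [AddCommGroup ω] [Module A ω] :
    ℕ → ModuleCat.{0} A → Prop
  | 0, _ => True
  | n + 1, M =>
    ∃ (X : ModuleCat.{0} A) (f : M →ₗ[A] X), MemAdd A ω X ∧ Function.Injective f ∧
      IsLeftApprox A ω f ∧ ApproxChain A ω n (ModuleCat.of A (X ⧸ LinearMap.range f))

/-- A ring extension `l : R → S` is a Frobenius extension; this is encoded by the
classical equivalent data of a Frobenius system: an `R`-`R`-bimodule map `E : S → R`
together with dual bases `x₁,…,xₘ, y₁,…,yₘ ∈ S`.  This is equivalent to: `_R S` is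
finitely generated projective and `_S S_R ≅ Hom_R(_R S_S, _R R_R)` as `S`-`R`-bimodules. -/
def IsFrobeniusExtension {R S : Type} [Ring R] [Ring S] (l : R →+* S) : Prop :=
  ∃ (E : S →+ R) (m : ℕ) (x y : Fin m → S),
    (∀ r s, E (l r * s) = r * E s) ∧ (∀ s r, E (s * l r) = E s * r) ∧
    (∀ s, (∑ i, x i * l (E (y i * s))) = s) ∧
    (∀ s, (∑ i, l (E (s * x i)) * y i) = s)

/-- The `R`-`R`-bimodule `S` (via `l`) is centrally projective over `R`, i.e. `_R S_R`
is a direct summand of a finite direct sum of copies of the regular bimodule `_R R_R`. -/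
def IsCentrallyProjective {R S : Type} [Ring R] [Ring S] (l : R →+* S) : Prop :=
  ∃ (n : ℕ) (i : S →+ (Fin n → R)) (p : (Fin n → R) →+ S),
    (∀ r s, i (l r * s) = fun j => r * i s j) ∧
    (∀ s r, i (s * l r) = fun j => i s j * r) ∧
    (∀ r v, p (fun j => r * v j) = l r * p v) ∧
    (∀ v r, p (fun j => v j * r) = p v * l r) ∧
    (∀ s, p (i s) = s)

/-- `(W, t)` realizes the induced module `S ⊗_R M` of the `R`-module `M` along
`l : R → S`: `t s m = s ⊗ m` is additive in each variable, `R`-balanced and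
`S`-equivariant, and satisfies the universal property among `S`-modules. -/
def IsInducedTensor {R S : Type} [Ring R] [Ring S] (l : R →+* S)
    (M : Type) [AddCommGroup M] [Module R M]
    (W : Type) [AddCommGroup W] [Module S W] (t : S →+ M →+ W) : Prop :=
  (∀ s r m, t (s * l r) m = t s (r • m)) ∧
  (∀ s' s m, t (s' * s) m = s' • t s m) ∧
  (∀ (V : Type) [AddCommGroup V] [Module S V] (b : S →+ M →+ V),
    (∀ s r m, b (s * l r) m = b s (r • m)) → (∀ s' s m, b (s' * s) m = s' • b s m) →
    ∃! h : W →ₗ[S] V, ∀ s m, h (t s m) = b s m)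

namespace FrobAux

variable {R S : Type} [Ring R] [Ring S]

section Basic
variable (l : R →+* S)

/-- The coinduced module `Hom_R(S, M)`, realized as left-`R`-semilinear additive maps. -/
def indSub (M : Type) [AddCommGroup M] [Module R M] : AddSubgroup (S →+ M) where
  carrier := {f | ∀ r s, f (l r * s) = r • f s}
  add_mem' := by
    intro a b ha hb r s
    simp only [AddMonoidHom.add_apply, ha r s, hb r s, smul_add]
  zero_mem' := by intro r s; simp
  neg_mem' := by intro a ha r s; simp [ha r s]

abbrev Ind (M : Type) [AddCommGroup M] [Module R M] : Type := ↥(indSub l M)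

variable {M : Type} [AddCommGroup M] [Module R M]

lemma Ind.prop' (f : Ind l M) (r : R) (s : S) : f.1 (l r * s) = r • f.1 s := f.2 r s

instance : SMul S (Ind l M) :=
  ⟨fun s₀ f => ⟨f.1.comp (AddMonoidHom.mulRight s₀), by
    intro r s
    simp only [AddMonoidHom.coe_comp, Function.comp_apply, AddMonoidHom.coe_mulRight]
    rw [mul_assoc]; exact f.2 r (s * s₀)⟩⟩

@[simp] lemma Ind.smul_apply (s₀ : S) (f : Ind l M) (s' : S) :
    (s₀ • f).1 s' = f.1 (s' * s₀) := rfl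

@[simp] lemma Ind.add_apply (f g : Ind l M) (s' : S) : (f + g).1 s' = f.1 s' + g.1 s' := rfl
@[simp] lemma Ind.zero_apply (s' : S) : (0 : Ind l M).1 s' = 0 := rfl

instance : Module S (Ind l M) where
  one_smul f := by apply Subtype.ext; apply AddMonoidHom.ext; intro s; simp
  mul_smul s₁ s₂ f := by
    apply Subtype.ext; apply AddMonoidHom.ext; intro s
    show f.1 (s * (s₁ * s₂)) = f.1 (s * s₁ * s₂)
    rw [mul_assoc]
  smul_zero s₀ := by apply Subtype.ext; apply AddMonoidHom.ext; intro s; rfl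
  smul_add s₀ f g := by apply Subtype.ext; apply AddMonoidHom.ext; intro s; rfl
  add_smul s₁ s₂ f := by
    apply Subtype.ext; apply AddMonoidHom.ext; intro s
    show f.1 (s * (s₁ + s₂)) = f.1 (s * s₁) + f.1 (s * s₂)
    rw [mul_add, map_add]
  zero_smul f := by
    apply Subtype.ext; apply AddMonoidHom.ext; intro s
    show f.1 (s * 0) = 0
    rw [mul_zero, map_zero]

/-- The sum of elements of `Ind`, evaluated. -/
lemma Ind.sum_apply {ι : Type} (u : Finset ι) (g : ι → Ind l M) (s : S) :
    (∑ i ∈ u, g i).1 s = ∑ i ∈ u, (g i).1 s := by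
  have : ((∑ i ∈ u, g i : Ind l M) : S →+ M) = ∑ i ∈ u, ((g i : S →+ M)) :=
    map_sum (indSub l M).subtype g u
  rw [this, AddMonoidHom.finset_sum_apply]

end Basic

section WithE
variable (l : R →+* S) (E : S →+ R)
variable (hE1 : ∀ r s, E (l r * s) = r * E s)
variable {M : Type} [AddCommGroup M] [Module R M]

/-- `tInd s v` is `s ⊗ v` inside `Ind`. -/
def tInd (s : S) (v : M) : Ind l M :=
  ⟨{ toFun := fun s' => E (s' * s) • v
     map_zero' := by simp
     map_add' := by intro a b; show E ((a+b)*s) • v = _; rw [add_mul, map_add, add_smul] },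
   by intro r s'; simp only [AddMonoidHom.coe_mk, ZeroHom.coe_mk]
      rw [mul_assoc, hE1, mul_smul]⟩

@[simp] lemma tInd_apply (s : S) (v : M) (s' : S) :
    (tInd l E hE1 s v).1 s' = E (s' * s) • v := rfl

lemma tInd_add_left (s₁ s₂ : S) (v : M) :
    tInd l E hE1 (s₁ + s₂) v = tInd l E hE1 s₁ v + tInd l E hE1 s₂ v := by
  apply Subtype.ext; apply AddMonoidHom.ext; intro s'
  simp [mul_add, add_smul]

lemma tInd_add_right (s : S) (v₁ v₂ : M) :
    tInd l E hE1 s (v₁ + v₂) = tInd l E hE1 s v₁ + tInd l E hE1 s v₂ := by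
  apply Subtype.ext; apply AddMonoidHom.ext; intro s'
  simp [smul_add]

lemma tInd_smul (s₀ s : S) (v : M) :
    s₀ • tInd l E hE1 s v = tInd l E hE1 (s₀ * s) v := by
  apply Subtype.ext; apply AddMonoidHom.ext; intro s'
  simp [mul_assoc]

lemma tInd_balanced (hE2 : ∀ s r, E (s * l r) = E s * r) (s : S) (r : R) (v : M) :
    tInd l E hE1 (s * l r) v = tInd l E hE1 s (r • v) := by
  apply Subtype.ext; apply AddMonoidHom.ext; intro s'
  simp only [tInd_apply]
  rw [← mul_assoc, hE2, mul_smul]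


end WithE

section Frob
variable (l : R →+* S) (E : S →+ R) {m : ℕ} (x y : Fin m → S)
variable (hE1 : ∀ r s, E (l r * s) = r * E s)
variable (hxy1 : ∀ s, (∑ i, x i * l (E (y i * s))) = s)
variable (hxy2 : ∀ s, (∑ i, l (E (s * x i)) * y i) = s)
variable {M : Type} [AddCommGroup M] [Module R M]

lemma tInd_sum_left {ι : Type} (u : Finset ι) (c : ι → S) (v : M) :
    tInd l E hE1 (∑ i ∈ u, c i) v = ∑ i ∈ u, tInd l E hE1 (c i) v := by
  classical
  induction u using Finset.induction with
  | empty =>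
    simp only [Finset.sum_empty]
    apply Subtype.ext; apply AddMonoidHom.ext; intro s'; simp
  | insert a s h ih =>
    rw [Finset.sum_insert h, Finset.sum_insert h, tInd_add_left, ih]

include hxy2 in
/-- Every element of `Ind l M` decomposes over the dual basis. -/
lemma ind_decomp (f : Ind l M) :
    f = ∑ i, tInd l E hE1 (x i) (f.1 (y i)) := by
  apply Subtype.ext; apply AddMonoidHom.ext; intro s
  rw [Ind.sum_apply]
  have : ∀ i, (tInd l E hE1 (x i) (f.1 (y i))).1 s = f.1 (l (E (s * x i)) * y i) := by
    intro i
    rw [tInd_apply, f.2]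
  rw [Finset.sum_congr rfl (fun i _ => this i), ← map_sum f.1, hxy2]

variable {V : Type} [AddCommGroup V] [Module S V]

/-- The key "Casimir" construction: from an additive `R`-semilinear map `h : M → V`
into an `S`-module, produce the `S`-linear map `Ind l M →ₗ[S] V`, `s ⊗ v ↦ s • h v`. -/
def bigH (h : M →+ V) (hsemi : ∀ (r : R) (v : M), h (r • v) = l r • h v) :
    Ind l M →ₗ[S] V where
  toFun f := ∑ i, x i • h (f.1 (y i))
  map_add' f g := by
    simp only [Ind.add_apply, map_add, smul_add, Finset.sum_add_distrib]
  map_smul' s₀ f := by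
    simp only [RingHom.id_apply, Ind.smul_apply]
    rw [Finset.smul_sum]
    have step1 : ∀ i, s₀ • (x i • h (f.1 (y i))) = (s₀ * x i) • h (f.1 (y i)) := by
      intro i; rw [smul_smul]
    rw [Finset.sum_congr rfl fun i _ => step1 i]
    have step2 : ∀ i, (s₀ * x i) • h (f.1 (y i))
        = ∑ k, x k • (l (E (y k * s₀ * x i)) • h (f.1 (y i))) := by
      intro i
      conv_lhs => rw [← hxy1 (s₀ * x i)]
      rw [Finset.sum_smul]
      refine Finset.sum_congr rfl fun k _ => ?_
      rw [mul_smul, ← mul_assoc]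
    rw [Finset.sum_congr rfl fun i _ => step2 i, Finset.sum_comm]
    refine Finset.sum_congr rfl fun k _ => ?_
    rw [← Finset.smul_sum]
    congr 1
    have step3 : ∀ i, l (E (y k * s₀ * x i)) • h (f.1 (y i))
        = h (f.1 (l (E (y k * s₀ * x i)) * y i)) := by
      intro i
      rw [f.2, hsemi]
    rw [Finset.sum_congr rfl fun i _ => step3 i, ← map_sum h, ← map_sum f.1, hxy2]

lemma bigH_tInd (h : M →+ V) (hsemi : ∀ (r : R) (v : M), h (r • v) = l r • h v)
    (s : S) (v : M) :
    bigH l E x y hxy1 hxy2 h hsemi (tInd l E hE1 s v) = s • h v := by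
  show (∑ i, x i • h (E (y i * s) • v)) = s • h v
  have : ∀ i, x i • h (E (y i * s) • v) = (x i * l (E (y i * s))) • h v := by
    intro i; rw [hsemi, smul_smul]
  rw [Finset.sum_congr rfl fun i _ => this i, ← Finset.sum_smul, hxy1]

end Frob

section IndMap
variable (l : R →+* S)
variable {M M₂ : Type} [AddCommGroup M] [Module R M] [AddCommGroup M₂] [Module R M₂]

/-- Functoriality of `Ind` on `R`-linear maps. -/
def indMap (g : M →ₗ[R] M₂) : Ind l M →ₗ[S] Ind l M₂ where
  toFun f := ⟨g.toAddMonoidHom.comp f.1, by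
    intro r s
    simp only [AddMonoidHom.coe_comp, LinearMap.toAddMonoidHom_coe, Function.comp_apply]
    rw [f.2, map_smul]⟩
  map_add' f₁ f₂ := by
    apply Subtype.ext; apply AddMonoidHom.ext; intro s
    simp
  map_smul' s₀ f := by
    apply Subtype.ext; apply AddMonoidHom.ext; intro s
    rfl

@[simp] lemma indMap_apply (g : M →ₗ[R] M₂) (f : Ind l M) (s : S) :
    (indMap l g f).1 s = g (f.1 s) := rfl

lemma indMap_tInd (E : S →+ R) (hE1 : ∀ r s, E (l r * s) = r * E s)
    (g : M →ₗ[R] M₂) (s : S) (v : M) :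
    indMap l g (tInd l E hE1 s v) = tInd l E hE1 s (g v) := by
  apply Subtype.ext; apply AddMonoidHom.ext; intro s'
  simp only [indMap_apply, tInd_apply, map_smul]

lemma indMap_injective {g : M →ₗ[R] M₂} (hg : Function.Injective g) :
    Function.Injective (indMap l g) := by
  intro f₁ f₂ h
  apply Subtype.ext; apply AddMonoidHom.ext; intro s
  have := congrArg (fun u => (Subtype.val u) s) h
  exact hg this

end IndMap


section Pi
variable (l : R →+* S)
variable {M : Type} [AddCommGroup M] [Module R M]

def indPi (a : ℕ) : Ind l (Fin a → M) →ₗ[S] (Fin a → Ind l M) where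
  toFun f j := ⟨(Pi.evalAddMonoidHom (fun _ : Fin a => M) j).comp f.1, by
    intro r s
    simp only [AddMonoidHom.coe_comp, Function.comp_apply, Pi.evalAddMonoidHom_apply]
    rw [f.2]
    simp⟩
  map_add' f g := by funext j; apply Subtype.ext; apply AddMonoidHom.ext; intro s; rfl
  map_smul' s₀ f := by funext j; apply Subtype.ext; apply AddMonoidHom.ext; intro s; rfl

def indPiInv (a : ℕ) : (Fin a → Ind l M) →ₗ[S] Ind l (Fin a → M) where
  toFun v := ⟨AddMonoidHom.mk' (fun s => fun j => (v j).1 s)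
      (by intro s₁ s₂; funext j; simp), by
    intro r s; funext j
    simp only [AddMonoidHom.mk'_apply]
    rw [(v j).2]
    simp⟩
  map_add' v w := by apply Subtype.ext; apply AddMonoidHom.ext; intro s; rfl
  map_smul' s₀ v := by apply Subtype.ext; apply AddMonoidHom.ext; intro s; rfl

lemma indPiInv_indPi (a : ℕ) (f : Ind l (Fin a → M)) :
    indPiInv l a (indPi l a f) = f := by
  apply Subtype.ext; apply AddMonoidHom.ext; intro s; rfl

end Pi

section MemAddLemmas
variable {A : Type} [Ring A]
variable {ω₁ ω₂ Z X : Type} [AddCommGroup ω₁] [Module A ω₁] [AddCommGroup ω₂] [Module A ω₂]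
variable [AddCommGroup Z] [Module A Z] [AddCommGroup X] [Module A X]

lemma memAdd_trans (h₁ : MemAdd A ω₁ X) (h₂ : MemAdd A X Z) : MemAdd A ω₁ Z := by
  obtain ⟨a, i0, p0, hip0⟩ := h₁
  obtain ⟨k, i1, p1, hip1⟩ := h₂
  refine ⟨k * a, ?_, ?_, ?_⟩
  · exact
      { toFun := fun z c => i0 (i1 z (finProdFinEquiv.symm c).1) (finProdFinEquiv.symm c).2
        map_add' := by intro z₁ z₂; funext c; simp
        map_smul' := by intro r z; funext c; simp }
  · exact
      { toFun := fun w => p1 (fun j => p0 (fun b => w (finProdFinEquiv (j, b))))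
        map_add' := by
          intro w₁ w₂
          have h : ∀ j, p0 (fun b => (w₁ + w₂) (finProdFinEquiv (j, b))) =
              p0 (fun b => w₁ (finProdFinEquiv (j, b))) +
                p0 (fun b => w₂ (finProdFinEquiv (j, b))) := by
            intro j
            have e1 : (fun b => (w₁ + w₂) (finProdFinEquiv (j, b))) =
                (fun b => w₁ (finProdFinEquiv (j, b))) +
                  (fun b => w₂ (finProdFinEquiv (j, b))) := rfl
            rw [e1, map_add]
          have h2 : (fun j => p0 fun b => (w₁ + w₂) (finProdFinEquiv (j, b))) =
              (fun j => p0 fun b => w₁ (finProdFinEquiv (j, b))) +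
                (fun j => p0 fun b => w₂ (finProdFinEquiv (j, b))) := by
            funext j; rw [h j]; rfl
          show p1 (fun j => p0 fun b => (w₁ + w₂) (finProdFinEquiv (j, b))) = _
          rw [h2, map_add]
        map_smul' := by
          intro r w
          have h : ∀ j, p0 (fun b => (r • w) (finProdFinEquiv (j, b))) =
              r • p0 (fun b => w (finProdFinEquiv (j, b))) := by
            intro j
            have e1 : (fun b => (r • w) (finProdFinEquiv (j, b))) =
                r • (fun b => w (finProdFinEquiv (j, b))) := rfl
            rw [e1, map_smul]
          have h2 : (fun j => p0 fun b => (r • w) (finProdFinEquiv (j, b))) =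
              r • (fun j => p0 fun b => w (finProdFinEquiv (j, b))) := by
            funext j; rw [h j]; rfl
          show p1 (fun j => p0 fun b => (r • w) (finProdFinEquiv (j, b))) =
            r • p1 (fun j => p0 fun b => w (finProdFinEquiv (j, b)))
          rw [h2, map_smul] }
  · intro z
    simp only [LinearMap.coe_mk, AddHom.coe_mk, Equiv.symm_apply_apply]
    have : ∀ j, p0 (fun b => i0 (i1 z j) b) = i1 z j := fun j => hip0 (i1 z j)
    simp only [this]
    exact hip1 z

lemma memAdd_congr (e : ω₁ ≃ₗ[A] ω₂) (h : MemAdd A ω₁ Z) : MemAdd A ω₂ Z := by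
  obtain ⟨a, i0, p0, hip⟩ := h
  refine ⟨a, (e.toLinearMap.compLeft (Fin a)).comp i0,
    p0.comp (e.symm.toLinearMap.compLeft (Fin a)), ?_⟩
  intro z
  show p0 ((e.symm.toLinearMap.compLeft (Fin a)) ((e.toLinearMap.compLeft (Fin a)) (i0 z))) = z
  have h : ((e.symm.toLinearMap.compLeft (Fin a)) ((e.toLinearMap.compLeft (Fin a)) (i0 z))) = i0 z := by
    funext j
    show e.symm (e (i0 z j)) = i0 z j
    exact e.symm_apply_apply _
  rw [h, hip]

lemma memAdd_self_pow (k : ℕ) : MemAdd A ω₁ (Fin k → ω₁) :=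
  ⟨k, LinearMap.id, LinearMap.id, fun _ => rfl⟩

end MemAddLemmas


section CP
variable (l : R →+* S) (E : S →+ R) {m : ℕ} (x y : Fin m → S)
variable {N : ℕ} (icp : S →+ (Fin N → R)) (pcp : (Fin N → R) →+ S)
variable {M : Type} [AddCommGroup M] [Module R M]

lemma single_mul_one (j : Fin N) (r : R) :
    (fun j' : Fin N => (Pi.single j (1 : R) : Fin N → R) j' * r) = Pi.single j r := by
  funext j'
  by_cases h : j' = j <;> simp [Pi.single_apply, h]

lemma one_mul_single (j : Fin N) (r : R) :
    (fun j' : Fin N => r * (Pi.single j (1 : R) : Fin N → R) j') = Pi.single j r := by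
  funext j'
  by_cases h : j' = j <;> simp [Pi.single_apply, h]

variable (hE1 : ∀ r s, E (l r * s) = r * E s)

def cpP : (Fin N → M) → Ind l M :=
  fun v => ∑ j, tInd l E hE1 (pcp (Pi.single j 1)) (v j)

def cpI : Ind l M → (Fin N → M) :=
  fun f j => ∑ i, icp (x i) j • f.1 (y i)

lemma tInd_sum_right {ι : Type} (u : Finset ι) (s : S) (v : ι → M) :
    tInd l E hE1 s (∑ i ∈ u, v i) = ∑ i ∈ u, tInd l E hE1 s (v i) := by
  classical
  induction u using Finset.induction with
  | empty =>
    simp only [Finset.sum_empty]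
    apply Subtype.ext; apply AddMonoidHom.ext; intro s'; simp
  | insert a s h ih =>
    rw [Finset.sum_insert h, Finset.sum_insert h, tInd_add_right, ih]

lemma cpI_tInd (hxy1 : ∀ s, (∑ i, x i * l (E (y i * s))) = s)
    (hcp2 : ∀ s r, icp (s * l r) = fun j => icp s j * r) (s : S) (v : M) :
    cpI l x y icp (tInd l E hE1 s v) = fun j => icp s j • v := by
  funext j
  show (∑ i, icp (x i) j • (E (y i * s) • v)) = icp s j • v
  have h1 : ∀ i, icp (x i) j • (E (y i * s) • v) = icp (x i * l (E (y i * s))) j • v := by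
    intro i
    have h := congrFun (hcp2 (x i) (E (y i * s))) j
    rw [smul_smul, ← h]
  rw [Finset.sum_congr rfl fun i _ => h1 i, ← Finset.sum_smul]
  congr 1
  have h2 : (∑ i, icp (x i * l (E (y i * s))) j)
      = icp (∑ i, x i * l (E (y i * s))) j := by
    rw [map_sum, Finset.sum_apply]
  rw [h2, hxy1]

lemma cpI_add (f g : Ind l M) :
    cpI l x y icp (f + g) = cpI l x y icp f + cpI l x y icp g := by
  funext j
  show (∑ i, icp (x i) j • (f + g).1 (y i)) = _
  rw [show (cpI l x y icp f + cpI l x y icp g) j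
      = (∑ i, icp (x i) j • f.1 (y i)) + ∑ i, icp (x i) j • g.1 (y i) from rfl,
    ← Finset.sum_add_distrib]
  refine Finset.sum_congr rfl fun i _ => ?_
  rw [Ind.add_apply, smul_add]

lemma cpI_sum {ι : Type} (u : Finset ι) (g : ι → Ind l M) :
    cpI l x y icp (∑ t ∈ u, g t) = ∑ t ∈ u, cpI l x y icp (g t) := by
  funext j
  show (∑ i, icp (x i) j • (∑ t ∈ u, g t).1 (y i)) = _
  have h : ∀ i : Fin m, icp (x i) j • (∑ t ∈ u, g t).1 (y i)
      = ∑ t ∈ u, icp (x i) j • (g t).1 (y i) := by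
    intro i
    rw [Ind.sum_apply, Finset.smul_sum]
  rw [Finset.sum_congr rfl fun i _ => h i, Finset.sum_comm, Finset.sum_apply]
  rfl

lemma cpP_sum {ι : Type} (u : Finset ι) (g : ι → (Fin N → M)) :
    cpP l E pcp hE1 (∑ t ∈ u, g t) = ∑ t ∈ u, cpP l E pcp hE1 (g t) := by
  show (∑ j, tInd l E hE1 _ ((∑ t ∈ u, g t) j)) = _
  have h : ∀ j, tInd l E hE1 (pcp (Pi.single j 1)) ((∑ t ∈ u, g t) j)
      = ∑ t ∈ u, tInd l E hE1 (pcp (Pi.single j 1)) (g t j) := by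
    intro j
    rw [Finset.sum_apply, tInd_sum_right]
  rw [Finset.sum_congr rfl fun j _ => h j, Finset.sum_comm]
  rfl

lemma cpP_add (v w : Fin N → M) :
    cpP l E pcp hE1 (v + w) = cpP l E pcp hE1 v + cpP l E pcp hE1 w := by
  show (∑ j, tInd l E hE1 _ ((v + w) j))
      = (∑ j, tInd l E hE1 (pcp (Pi.single j 1)) (v j))
        + ∑ j, tInd l E hE1 (pcp (Pi.single j 1)) (w j)
  rw [← Finset.sum_add_distrib]
  exact Finset.sum_congr rfl fun j _ => by rw [Pi.add_apply, tInd_add_right]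

lemma cpP_smul (hE2 : ∀ s r, E (s * l r) = E s * r)
    (hcp3 : ∀ r v, pcp (fun j => r * v j) = l r * pcp v)
    (hcp4 : ∀ v r, pcp (fun j => v j * r) = pcp v * l r)
    (r : R) (v : Fin N → M) :
    cpP l E pcp hE1 (r • v) = l r • cpP l E pcp hE1 v := by
  show (∑ j, tInd l E hE1 _ ((r • v) j))
      = l r • ∑ j, tInd l E hE1 (pcp (Pi.single j 1)) (v j)
  rw [Finset.smul_sum]
  refine Finset.sum_congr rfl fun j _ => ?_
  have h1 : pcp (Pi.single j (1 : R)) * l r = pcp (Pi.single j r) := by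
    rw [← hcp4, single_mul_one]
  have h2 : l r * pcp (Pi.single j (1 : R)) = pcp (Pi.single j r) := by
    rw [← hcp3, one_mul_single]
  rw [Pi.smul_apply, ← tInd_balanced l E hE1 hE2, h1, ← h2, tInd_smul]

lemma cpP_cpI_tInd (hE2 : ∀ s r, E (s * l r) = E s * r)
    (hxy1 : ∀ s, (∑ i, x i * l (E (y i * s))) = s)
    (hcp2 : ∀ s r, icp (s * l r) = fun j => icp s j * r)
    (hcp4 : ∀ v r, pcp (fun j => v j * r) = pcp v * l r)
    (hcp5 : ∀ s, pcp (icp s) = s) (s : S) (v : M) :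
    cpP l E pcp hE1 (cpI l x y icp (tInd l E hE1 s v)) = tInd l E hE1 s v := by
  rw [cpI_tInd l E x y icp hE1 hxy1 hcp2]
  show (∑ j, tInd l E hE1 _ (icp s j • v)) = _
  have h1 : ∀ j, tInd l E hE1 (pcp (Pi.single j 1)) (icp s j • v)
      = tInd l E hE1 (pcp (Pi.single j (icp s j))) v := by
    intro j
    rw [← tInd_balanced l E hE1 hE2, ← hcp4, single_mul_one]
  rw [Finset.sum_congr rfl fun j _ => h1 j, ← tInd_sum_left]
  have h2 : (∑ j, pcp (Pi.single j (icp s j))) = pcp (icp s) := by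
    rw [← map_sum]
    congr 1
    exact Finset.univ_sum_single (icp s)
  rw [h2, hcp5]

lemma cpP_cpI (hE2 : ∀ s r, E (s * l r) = E s * r)
    (hxy1 : ∀ s, (∑ i, x i * l (E (y i * s))) = s)
    (hxy2 : ∀ s, (∑ i, l (E (s * x i)) * y i) = s)
    (hcp2 : ∀ s r, icp (s * l r) = fun j => icp s j * r)
    (hcp4 : ∀ v r, pcp (fun j => v j * r) = pcp v * l r)
    (hcp5 : ∀ s, pcp (icp s) = s) (f : Ind l M) :
    cpP l E pcp hE1 (cpI l x y icp f) = f := by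
  conv_lhs => rw [ind_decomp l E x y hE1 hxy2 f]
  rw [cpI_sum, cpP_sum]
  rw [Finset.sum_congr rfl fun i _ =>
    cpP_cpI_tInd l E x y icp pcp hE1 hE2 hxy1 hcp2 hcp4 hcp5 (x i) (f.1 (y i))]
  exact (ind_decomp l E x y hE1 hxy2 f).symm

lemma cpI_smul (hE1 : ∀ r s, E (l r * s) = r * E s)
    (hxy1 : ∀ s, (∑ i, x i * l (E (y i * s))) = s)
    (hxy2 : ∀ s, (∑ i, l (E (s * x i)) * y i) = s)
    (hcp1 : ∀ r s, icp (l r * s) = fun j => r * icp s j)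
    (hcp2 : ∀ s r, icp (s * l r) = fun j => icp s j * r)
    (r : R) (f : Ind l M) :
    cpI l x y icp (l r • f) = r • cpI l x y icp f := by
  conv_lhs => rw [ind_decomp l E x y hE1 hxy2 f]
  rw [Finset.smul_sum]
  have h0 : ∀ i, l r • tInd l E hE1 (x i) (f.1 (y i))
      = tInd l E hE1 (l r * x i) (f.1 (y i)) := fun i => tInd_smul l E hE1 _ _ _
  rw [Finset.sum_congr rfl fun i _ => h0 i, cpI_sum]
  conv_rhs => rw [ind_decomp l E x y hE1 hxy2 f, cpI_sum]
  rw [Finset.smul_sum]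
  refine Finset.sum_congr rfl fun i _ => ?_
  rw [cpI_tInd l E x y icp hE1 hxy1 hcp2, cpI_tInd l E x y icp hE1 hxy1 hcp2]
  funext j
  rw [Pi.smul_apply]
  have h := congrFun (hcp1 r (x i)) j
  rw [h, mul_smul]

/-- Central projectivity: the restriction of `Ind l M` to `R` lies in `add M`. -/
lemma memAdd_compHom_ind (hE1 : ∀ r s, E (l r * s) = r * E s)
    (hE2 : ∀ s r, E (s * l r) = E s * r)
    (hxy1 : ∀ s, (∑ i, x i * l (E (y i * s))) = s)
    (hxy2 : ∀ s, (∑ i, l (E (s * x i)) * y i) = s)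
    (hcp1 : ∀ r s, icp (l r * s) = fun j => r * icp s j)
    (hcp2 : ∀ s r, icp (s * l r) = fun j => icp s j * r)
    (hcp3 : ∀ r v, pcp (fun j => r * v j) = l r * pcp v)
    (hcp4 : ∀ v r, pcp (fun j => v j * r) = pcp v * l r)
    (hcp5 : ∀ s, pcp (icp s) = s) :
    @MemAdd R _ M _ _ (Ind l M) _ (Module.compHom (Ind l M) l) := by
  letI : Module R (Ind l M) := Module.compHom (Ind l M) l
  refine ⟨N,
    { toFun := cpI l x y icp
      map_add' := cpI_add l x y icp
      map_smul' := fun r f => by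
        show cpI l x y icp (l r • f) = r • cpI l x y icp f
        exact cpI_smul l E x y icp hE1 hxy1 hxy2 hcp1 hcp2 r f },
    { toFun := cpP l E pcp hE1
      map_add' := cpP_add l E pcp hE1
      map_smul' := fun r v => by
        show cpP l E pcp hE1 (r • v) = l r • cpP l E pcp hE1 v
        exact cpP_smul l E pcp hE1 hE2 hcp3 hcp4 r v },
    fun f => cpP_cpI l E x y icp pcp hE1 hE2 hxy1 hxy2 hcp2 hcp4 hcp5 f⟩

/-- Restriction of any `S`-module in `add (Ind l M)` lies in `add M` over `R`. -/
lemma memAdd_res (hE1 : ∀ r s, E (l r * s) = r * E s)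
    (hE2 : ∀ s r, E (s * l r) = E s * r)
    (hxy1 : ∀ s, (∑ i, x i * l (E (y i * s))) = s)
    (hxy2 : ∀ s, (∑ i, l (E (s * x i)) * y i) = s)
    (hcp1 : ∀ r s, icp (l r * s) = fun j => r * icp s j)
    (hcp2 : ∀ s r, icp (s * l r) = fun j => icp s j * r)
    (hcp3 : ∀ r v, pcp (fun j => r * v j) = l r * pcp v)
    (hcp4 : ∀ v r, pcp (fun j => v j * r) = pcp v * l r)
    (hcp5 : ∀ s, pcp (icp s) = s)
    (Z : Type) [AddCommGroup Z] [Module S Z]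
    (h : MemAdd S (Ind l M) Z) :
    @MemAdd R _ M _ _ Z _ (Module.compHom Z l) := by
  letI : Module R Z := Module.compHom Z l
  letI : Module R (Ind l M) := Module.compHom (Ind l M) l
  obtain ⟨k, iS, pS, hip⟩ := h
  refine memAdd_trans (memAdd_compHom_ind l E x y icp pcp hE1 hE2 hxy1 hxy2
    hcp1 hcp2 hcp3 hcp4 hcp5) ⟨k,
    { toFun := iS
      map_add' := iS.map_add
      map_smul' := fun r z => by
        show iS (l r • z) = r • iS z
        rw [map_smul]
        rfl },
    { toFun := pS
      map_add' := pS.map_add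
      map_smul' := fun r v => by
        show pS (r • v) = l r • pS v
        have : (r • v : Fin k → Ind l M) = l r • v := rfl
        rw [this, map_smul] },
    hip⟩

end CP


section Ind2
variable (l : R →+* S)

lemma memAdd_ind {ωM X : Type} [AddCommGroup ωM] [Module R ωM]
    [AddCommGroup X] [Module R X] (h : MemAdd R ωM X) :
    MemAdd S (Ind l ωM) (Ind l X) := by
  obtain ⟨a, i0, p0, hip⟩ := h
  refine ⟨a, (indPi l a).comp (indMap l i0), (indMap l p0).comp (indPiInv l a), ?_⟩
  intro f
  show indMap l p0 (indPiInv l a (indPi l a (indMap l i0 f))) = f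
  rw [indPiInv_indPi]
  apply Subtype.ext; apply AddMonoidHom.ext; intro s
  show p0 (i0 (f.1 s)) = f.1 s
  exact hip _

end Ind2

section Transport
variable {A : Type} [Ring A] {ωA : Type} [AddCommGroup ωA] [Module A ωA]

lemma approxChain_congr (k : ℕ) (M₁ M₂ : ModuleCat.{0} A)
    (e : (M₁ : Type) ≃ₗ[A] (M₂ : Type)) (h : ApproxChain A ωA k M₂) :
    ApproxChain A ωA k M₁ := by
  induction k generalizing M₁ M₂ with
  | zero => trivial
  | succ n ih =>
    obtain ⟨X, f, hmem, hinj, happ, hchain⟩ := h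
    refine ⟨X, f.comp e.toLinearMap, hmem, ?_, ?_, ?_⟩
    · intro a b hab
      exact e.injective (hinj hab)
    · intro Z _ _ hZ g
      obtain ⟨h', hh'⟩ := happ Z hZ (g.comp e.symm.toLinearMap)
      refine ⟨h', ?_⟩
      apply LinearMap.ext
      intro v
      have := LinearMap.congr_fun hh' (e v)
      simpa using this
    · have hr : LinearMap.range (f.comp e.toLinearMap) = LinearMap.range f := by
        rw [LinearMap.range_comp, LinearEquiv.range, Submodule.map_top]
      rw [hr]
      exact hchain

lemma approxChain_congr_omega {ωB : Type} [AddCommGroup ωB] [Module A ωB]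
    (e : ωA ≃ₗ[A] ωB) (k : ℕ) (M : ModuleCat.{0} A)
    (h : ApproxChain A ωA k M) : ApproxChain A ωB k M := by
  induction k generalizing M with
  | zero => trivial
  | succ n ih =>
    obtain ⟨X, f, hmem, hinj, happ, hchain⟩ := h
    exact ⟨X, f, memAdd_congr e hmem, hinj,
      fun Z _ _ hZ g => happ Z (memAdd_congr e.symm hZ) g, ih _ hchain⟩

end Transport

section Main
variable (l : R →+* S) (E : S →+ R) {m : ℕ} (x y : Fin m → S)
variable {ω : Type} [AddCommGroup ω] [Module R ω]

lemma main_chain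
    (hE1 : ∀ r s, E (l r * s) = r * E s)
    (hE2 : ∀ s r, E (s * l r) = E s * r)
    (hxy1 : ∀ s, (∑ i, x i * l (E (y i * s))) = s)
    (hxy2 : ∀ s, (∑ i, l (E (s * x i)) * y i) = s)
    (hres : ∀ (Z : Type) [AddCommGroup Z] [Module S Z], MemAdd S (Ind l ω) Z →
      @MemAdd R _ ω _ _ Z _ (Module.compHom Z l)) :
    ∀ (k : ℕ) (M : ModuleCat.{0} R), ApproxChain R ω k M →
      ApproxChain S (Ind l ω) k (ModuleCat.of S (Ind l M)) := by
  intro k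
  induction k with
  | zero => intro M _; trivial
  | succ n ih =>
    intro M h
    obtain ⟨X, f, hmem, hinj, happ, hchain⟩ := h
    refine ⟨ModuleCat.of S (Ind l X), indMap l f, memAdd_ind l hmem,
      indMap_injective l hinj, ?_, ?_⟩
    · -- left approximation
      intro Z _ _ hZ g
      letI : Module R Z := Module.compHom Z l
      set g' : (M : Type) →ₗ[R] Z :=
        { toFun := fun v => g (tInd l E hE1 1 v)
          map_add' := fun v₁ v₂ => by
            show g (tInd l E hE1 1 (v₁ + v₂)) = g (tInd l E hE1 1 v₁) + g (tInd l E hE1 1 v₂)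
            rw [tInd_add_right, map_add]
          map_smul' := fun r v => by
            show g (tInd l E hE1 1 (r • v)) = l r • g (tInd l E hE1 1 v)
            rw [← tInd_balanced l E hE1 hE2, one_mul, ← map_smul, tInd_smul, mul_one] } with hg'
      obtain ⟨h', hh'⟩ := happ Z (hres Z hZ) g'
      have hsemi : ∀ (r : R) (v : (X : Type)), h'.toAddMonoidHom (r • v) = l r • h'.toAddMonoidHom v := by
        intro r v
        show h' (r • v) = l r • h' v
        exact h'.map_smul r v
      refine ⟨bigH l E x y hxy1 hxy2 h'.toAddMonoidHom hsemi, ?_⟩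
      have key : ∀ (s : S) (v : (M : Type)),
          bigH l E x y hxy1 hxy2 h'.toAddMonoidHom hsemi (indMap l f (tInd l E hE1 s v))
            = g (tInd l E hE1 s v) := by
        intro s v
        rw [indMap_tInd, bigH_tInd]
        have h1 : h' (f v) = g' v := LinearMap.congr_fun hh' v
        show s • h' (f v) = _
        rw [h1]
        show s • g (tInd l E hE1 1 v) = g (tInd l E hE1 s v)
        rw [← map_smul, tInd_smul, mul_one]
      apply LinearMap.ext
      intro u
      have hdec := ind_decomp l E x y hE1 hxy2 u
      show bigH l E x y hxy1 hxy2 h'.toAddMonoidHom hsemi (indMap l f u) = g u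
      conv_lhs => rw [hdec]
      conv_rhs => rw [hdec]
      rw [map_sum, map_sum, map_sum]
      exact Finset.sum_congr rfl fun i _ => key (x i) (u.1 (y i))
    · -- the quotient stage
      have hsur : Function.Surjective (indMap l (LinearMap.range f).mkQ) := by
        intro u
        choose c hc using fun i =>
          Submodule.mkQ_surjective (LinearMap.range f) (u.1 (y i))
        refine ⟨∑ i, tInd l E hE1 (x i) (c i), ?_⟩
        rw [map_sum]
        conv_rhs => rw [ind_decomp l E x y hE1 hxy2 u]
        exact Finset.sum_congr rfl fun i _ => by rw [indMap_tInd, hc i]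
      have hker : LinearMap.ker (indMap l (LinearMap.range f).mkQ)
          = LinearMap.range (indMap l f) := by
        apply le_antisymm
        · intro u hu
          rw [LinearMap.mem_ker] at hu
          have hu' : ∀ i, u.1 (y i) ∈ LinearMap.range f := by
            intro i
            have h0 := congrArg (fun w : Ind l (X ⧸ LinearMap.range f) => w.1 (y i)) hu
            have h1 : (LinearMap.range f).mkQ (u.1 (y i)) = 0 := h0
            rwa [Submodule.mkQ_apply, Submodule.Quotient.mk_eq_zero] at h1
          choose c hc using hu'
          refine ⟨∑ i, tInd l E hE1 (x i) (c i), ?_⟩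
          rw [map_sum]
          conv_rhs => rw [ind_decomp l E x y hE1 hxy2 u]
          exact Finset.sum_congr rfl fun i _ => by rw [indMap_tInd, hc i]
        · rintro u ⟨v, rfl⟩
          rw [LinearMap.mem_ker]
          apply Subtype.ext; apply AddMonoidHom.ext; intro s
          show (LinearMap.range f).mkQ (f (v.1 s)) = 0
          rw [Submodule.mkQ_apply, Submodule.Quotient.mk_eq_zero]
          exact ⟨v.1 s, rfl⟩
      have e : ((Ind l X ⧸ LinearMap.range (indMap l f)) ≃ₗ[S]
          Ind l ((X : Type) ⧸ LinearMap.range f)) :=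
        (Submodule.quotEquivOfEq _ _ hker.symm).trans
          (LinearMap.quotKerEquivOfSurjective _ hsur)
      exact approxChain_congr n
        (ModuleCat.of S ((Ind l (X : Type)) ⧸ LinearMap.range (indMap l f)))
        (ModuleCat.of S (Ind l ((X : Type) ⧸ LinearMap.range f))) e
        (ih (ModuleCat.of R ((X : Type) ⧸ LinearMap.range f)) hchain)

end Main


section Isos
variable (l : R →+* S) (E : S →+ R) {m : ℕ} (x y : Fin m → S)

/-- `S ≃ₗ[S] Ind l R`. -/
lemma eqvS (hE1 : ∀ r s, E (l r * s) = r * E s)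
    (hE2 : ∀ s r, E (s * l r) = E s * r)
    (hxy1 : ∀ s, (∑ i, x i * l (E (y i * s))) = s)
    (hxy2 : ∀ s, (∑ i, l (E (s * x i)) * y i) = s) :
    Nonempty (S ≃ₗ[S] Ind l R) := by
  have hsemil : ∀ (r v : R), l.toAddMonoidHom (r • v) = l r • l.toAddMonoidHom v := by
    intro r v
    show l (r • v) = l r • l v
    rw [smul_eq_mul, map_mul, smul_eq_mul]
  refine ⟨LinearEquiv.ofLinear
    { toFun := fun s => tInd l E hE1 s 1
      map_add' := fun s₁ s₂ => tInd_add_left l E hE1 s₁ s₂ 1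
      map_smul' := fun s₀ s => (tInd_smul l E hE1 s₀ s 1).symm }
    (bigH l E x y hxy1 hxy2 l.toAddMonoidHom hsemil)
    ?_ ?_⟩
  · apply LinearMap.ext
    intro u
    show tInd l E hE1 (∑ i, x i • l.toAddMonoidHom (u.1 (y i))) 1 = u
    rw [tInd_sum_left]
    conv_rhs => rw [ind_decomp l E x y hE1 hxy2 u]
    refine Finset.sum_congr rfl fun i _ => ?_
    show tInd l E hE1 (x i • l (u.1 (y i))) 1 = tInd l E hE1 (x i) (u.1 (y i))
    rw [smul_eq_mul, tInd_balanced l E hE1 hE2, smul_eq_mul, mul_one]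
  · apply LinearMap.ext
    intro s
    show bigH l E x y hxy1 hxy2 l.toAddMonoidHom hsemil (tInd l E hE1 s 1) = s
    rw [bigH_tInd]
    show s • l 1 = s
    rw [map_one, smul_eq_mul, mul_one]

variable {ω : Type} [AddCommGroup ω] [Module R ω]

/-- `Ind l ω ≃ₗ[S] W` for any realization `(W, t)` of the induced module. -/
lemma eqvW (hE1 : ∀ r s, E (l r * s) = r * E s)
    (hE2 : ∀ s r, E (s * l r) = E s * r)
    (hxy1 : ∀ s, (∑ i, x i * l (E (y i * s))) = s)
    (hxy2 : ∀ s, (∑ i, l (E (s * x i)) * y i) = s)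
    (W : Type) [AddCommGroup W] [Module S W] (t : S →+ ω →+ W)
    (hW : IsInducedTensor l ω W t) : Nonempty (Ind l ω ≃ₗ[S] W) := by
  obtain ⟨hbal, hequiv, huniv⟩ := hW
  have hsemi : ∀ (r : R) (v : ω), t 1 (r • v) = l r • t 1 v := by
    intro r v
    rw [← hbal 1 r v, one_mul]
    have h0 := hequiv (l r) 1 v
    rw [mul_one] at h0
    exact h0
  -- h₂ : Ind l ω →ₗ[S] W
  set h₂ : Ind l ω →ₗ[S] W := bigH l E x y hxy1 hxy2 (t 1) hsemi with hh₂def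
  have hh₂ : ∀ (s : S) (v : ω), h₂ (tInd l E hE1 s v) = t s v := by
    intro s v
    rw [hh₂def, bigH_tInd]
    have h0 := hequiv s 1 v
    rw [mul_one] at h0
    exact h0.symm
  -- h₁ : W →ₗ[S] Ind l ω
  have hb : ∃ b : S →+ ω →+ Ind l ω, ∀ s v, b s v = tInd l E hE1 s v := by
    refine ⟨{ toFun := fun s => AddMonoidHom.mk' (fun v => tInd l E hE1 s v)
                (tInd_add_right l E hE1 s)
              map_zero' := ?_
              map_add' := ?_ }, fun s v => rfl⟩
    · apply AddMonoidHom.ext; intro v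
      apply Subtype.ext; apply AddMonoidHom.ext; intro s'
      simp
    · intro s₁ s₂
      apply AddMonoidHom.ext; intro v
      exact tInd_add_left l E hE1 s₁ s₂ v
  obtain ⟨b, hbdef⟩ := hb
  obtain ⟨h₁, hh₁, -⟩ := huniv (Ind l ω) b
    (fun s r v => by rw [hbdef, hbdef, tInd_balanced l E hE1 hE2])
    (fun s' s v => by rw [hbdef, hbdef, tInd_smul])
  refine ⟨LinearEquiv.ofLinear h₂ h₁ ?_ ?_⟩
  · -- h₂ ∘ h₁ = id on W
    obtain ⟨h0, _, hu0⟩ := huniv W t hbal hequiv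
    have e1 : h₂.comp h₁ = h0 := by
      apply hu0
      intro s v
      show h₂ (h₁ (t s v)) = t s v
      rw [hh₁, hbdef, hh₂]
    have e2 : LinearMap.id = h0 := by
      apply hu0
      intro s v
      rfl
    rw [e1, ← e2]
  · -- h₁ ∘ h₂ = id on Ind l ω
    apply LinearMap.ext
    intro u
    show h₁ (h₂ u) = u
    conv_lhs => rw [ind_decomp l E x y hE1 hxy2 u]
    rw [map_sum, map_sum]
    conv_rhs => rw [ind_decomp l E x y hE1 hxy2 u]
    refine Finset.sum_congr rfl fun i _ => ?_
    rw [hh₂, hh₁, hbdef]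

end Isos

end FrobAux

/-- Let `S/R` be a Frobenius extension of two-sided Noetherian rings
with the bimodule `_R S_R` centrally projective over `R`.  If `ω` is a finitely
generated `R`-module with `fadim_R ω ≥ n + 2` and `Ext^i_R(ω, ω) = 0` for `1 ≤ i ≤ n`,
then `fadim_S (S ⊗_R ω) ≥ n + 2`. -/
theorem fadim_of_inducedTensor
    (R S : Type) [Ring R] [Ring S] [IsNoetherianRing R] [IsNoetherianRing Rᵐᵒᵖ]
    [IsNoetherianRing S] [IsNoetherianRing Sᵐᵒᵖ] (l : R →+* S)
    (hFrob : IsFrobeniusExtension l) (hCP : IsCentrallyProjective l)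
    (ω : Type) [AddCommGroup ω] [Module R ω] [Module.Finite R ω] (n : ℕ)
    (hfadim : ApproxChain R ω (n + 2) (ModuleCat.of R R))
    (hself : ∀ i, 1 ≤ i → i ≤ n → ExtVanish R i ω ω)
    (W : Type) [AddCommGroup W] [Module S W] (t : S →+ ω →+ W)
    (hW : IsInducedTensor l ω W t) :
    ApproxChain S W (n + 2) (ModuleCat.of S S) := by
  classical
  obtain ⟨E, m, x, y, hE1, hE2, hxy1, hxy2⟩ := hFrob
  obtain ⟨N, icp, pcp, hcp1, hcp2, hcp3, hcp4, hcp5⟩ := hCP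
  have hres : ∀ (Z : Type) [AddCommGroup Z] [Module S Z],
      MemAdd S (FrobAux.Ind l ω) Z → @MemAdd R _ ω _ _ Z _ (Module.compHom Z l) := by
    intro Z _ _ hZ
    exact FrobAux.memAdd_res l E x y icp pcp hE1 hE2 hxy1 hxy2
      hcp1 hcp2 hcp3 hcp4 hcp5 Z hZ
  have hchainInd := FrobAux.main_chain l E x y hE1 hE2 hxy1 hxy2 hres
    (n + 2) (ModuleCat.of R R) hfadim
  obtain ⟨eS⟩ := FrobAux.eqvS l E x y hE1 hE2 hxy1 hxy2
  obtain ⟨eW⟩ := FrobAux.eqvW l E x y hE1 hE2 hxy1 hxy2 W t hW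
  have hchainS : ApproxChain S (FrobAux.Ind l ω) (n + 2) (ModuleCat.of S S) :=
    FrobAux.approxChain_congr (n + 2) (ModuleCat.of S S)
      (ModuleCat.of S (FrobAux.Ind l R)) eS hchainInd
  exact FrobAux.approxChain_congr_omega eW (n + 2) _ hchainS


end
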